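/- arXiv:2010.15910 — 3 statements merged into one kernel-verified Lean document; each statement's English description precedes it below -/
import Mathlib

section
/- Let u : ℝ^d → ℝ be bounded, let x* ∈ ℝ^d and C > 0, and suppose sup_{B₁(x*)}|u| ≤ 4C. If sup_{B_{2^{-j}}(x*)}|u| ≤ C·2^{-2j} for every j ∈ M(x*,u), then sup_{B_{2^{-j}}(x*)}|u| ≤ 4C·2^{-2j} for every j ∈ ℕ. -/
open Metric MeasureTheory Set Filter
open scoped Topology RealInnerProductSpace ENNReal NNReal

noncomputable section

abbrev E (d : ℕ) := EuclideanSpace ℝ (Fin d)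
abbrev Mat (d : ℕ) := Matrix (Fin d) (Fin d) ℝ

/-- Operator norm of a matrix, viewed as a linear operator on Euclidean space. -/
def matOpNorm {d : ℕ} (N : Mat d) : ℝ :=
  ‖LinearMap.toContinuousLinearMap (Matrix.toEuclideanLin N)‖

/-- `(λ,Λ)`-uniform ellipticity of an operator on symmetric matrices. -/
def UniformlyElliptic {d : ℕ} (lam Lam : ℝ) (F : Mat d → ℝ) : Prop :=
  F 0 = 0 ∧
  ∀ M N : Mat d, M.IsSymm → N.IsSymm → N.PosSemidef →
    lam * matOpNorm N ≤ F (M + N) - F M ∧ F (M + N) - F M ≤ Lam * matOpNorm N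

/-- Positive homogeneity of degree one. -/
def PosHomOne {d : ℕ} (F : Mat d → ℝ) : Prop :=
  ∀ τ : ℝ, 0 ≤ τ → ∀ M : Mat d, F (τ • M) = τ * F M

/-- Pucci maximal operator `M⁺_{λ,Λ}`. -/
def pucciPlus {d : ℕ} (lam Lam : ℝ) (M : Mat d) : ℝ :=
  if h : M.IsHermitian then
    ∑ i, (Lam * max (h.eigenvalues i) 0 + lam * min (h.eigenvalues i) 0)
  else 0

/-- Pucci minimal operator `M⁻_{λ,Λ}`. -/
def pucciMinus {d : ℕ} (lam Lam : ℝ) (M : Mat d) : ℝ :=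
  if h : M.IsHermitian then
    ∑ i, (lam * max (h.eigenvalues i) 0 + Lam * min (h.eigenvalues i) 0)
  else 0

/-- Hessian matrix of a function at a point (via iterated directional derivatives). -/
def hessMat {d : ℕ} (φ : E d → ℝ) (x : E d) : Mat d :=
  Matrix.of fun i j =>
    fderiv ℝ (fun y => fderiv ℝ φ y (EuclideanSpace.single j (1:ℝ))) x
      (EuclideanSpace.single i (1:ℝ))

def OmegaPlus {d : ℕ} (u : E d → ℝ) (D : Set (E d)) : Set (E d) := {x ∈ D | 0 < u x}
def OmegaMinus {d : ℕ} (u : E d → ℝ) (D : Set (E d)) : Set (E d) := {x ∈ D | u x < 0}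
def Omega {d : ℕ} (u : E d → ℝ) (D : Set (E d)) : Set (E d) := OmegaPlus u D ∪ OmegaMinus u D
def freeBoundary {d : ℕ} (u : E d → ℝ) (D : Set (E d)) : Set (E d) :=
  (frontier (OmegaPlus u D) ∪ frontier (OmegaMinus u D)) ∩ D

/-- `u` is a `C^{1,1}` strong solution of the free transmission problem
`F₁(D²u)·χ_{u>0} + F₂(D²u)·χ_{u<0} = 1` on the open set `D`, with gradient `g`
and (a.e.-defined) Hessian `H`. -/
structure IsStrongSolutionOn {d : ℕ} (F₁ F₂ : Mat d → ℝ) (u : E d → ℝ)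
    (g : E d → E d) (H : E d → Mat d) (D : Set (E d)) : Prop where
  grad : ∀ x ∈ D, HasGradientAt u (g x) x
  lipGrad : ∀ x ∈ D, ∃ K : ℝ≥0, ∃ s ∈ 𝓝 x, LipschitzOnWith K g (s ∩ D)
  hessAE : ∀ᵐ x ∂(volume : Measure (E d)), x ∈ D →
    HasFDerivAt g (LinearMap.toContinuousLinearMap (Matrix.toEuclideanLin (H x))) x
  hessSymm : ∀ᵐ x ∂(volume : Measure (E d)), x ∈ D → (H x).IsSymm
  solPlus : ∀ᵐ x ∂(volume : Measure (E d)), x ∈ D → 0 < u x → F₁ (H x) = 1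
  solMinus : ∀ᵐ x ∂(volume : Measure (E d)), x ∈ D → u x < 0 → F₂ (H x) = 1

/-- Normalized volume of the negativity set in the ball `B_r(x)`. -/
def Vr {d : ℕ} (u : E d → ℝ) (D : Set (E d)) (x : E d) (r : ℝ) : ℝ :=
  (volume (ball x r ∩ OmegaMinus u D)).toReal / r ^ d

def supAbs {d : ℕ} (u : E d → ℝ) (s : Set (E d)) : ℝ :=
  sSup ((fun y => |u y|) '' s)

/-- The set of dyadic scales at which `|u|` does not decay too fast around `x`. -/
def MSet {d : ℕ} (u : E d → ℝ) (D : Set (E d)) (x : E d) : Set ℕ :=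
  {j | (1 / 16) * supAbs u (ball x ((1/2 : ℝ) ^ j) ∩ D) ≤
        supAbs u (ball x ((1/2 : ℝ) ^ (j + 1)) ∩ D)}

/-- Minimal width of a set: the smallest distance between two parallel hyperplanes
enclosing `A` (with value `0` for `A = ∅`). -/
def MD {d : ℕ} (A : Set (E d)) : ℝ :=
  sInf ((fun e : E d => sSup ((fun x => (inner ℝ e x : ℝ)) '' A) - sInf ((fun x => (inner ℝ e x : ℝ)) '' A)) ''
    {e : E d | ‖e‖ = 1})

/-- Thickness of the zero set of `u` in `B_r(x)`. -/
def deltaTh {d : ℕ} (u : E d → ℝ) (x : E d) (r : ℝ) : ℝ :=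
  MD {z ∈ ball x r | u z = 0} / r


/-- Supremum of `|u|` over a set, computed in the extended nonnegative reals. -/
def eSupAbs {d : ℕ} (u : E d → ℝ) (s : Set (E d)) : ℝ≥0∞ :=
  ⨆ x ∈ s, ENNReal.ofReal |u x|

/-- The set of dyadic scales at which `|u|` does not decay too fast around `x`. -/
def MSetE {d : ℕ} (u : E d → ℝ) (x : E d) : Set ℕ :=
  {j | ENNReal.ofReal (1 / 16) * eSupAbs u (ball x ((1/2 : ℝ) ^ j)) ≤
        eSupAbs u (ball x ((1/2 : ℝ) ^ (j + 1)))}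

/-- from quadratic decay along the scales in `M(x*,u)` to quadratic decay
along all dyadic scales. -/
theorem quadratic_growth_all_scales {d : ℕ} (u : E d → ℝ) (xs : E d) (C : ℝ) (hC : 0 < C)
    (hbdd : ∃ M : ℝ, ∀ x : E d, |u x| ≤ M)
    (hball : eSupAbs u (ball xs 1) ≤ ENNReal.ofReal (4 * C))
    (hM : ∀ j ∈ MSetE u xs,
      eSupAbs u (ball xs ((1/2 : ℝ) ^ j)) ≤ ENNReal.ofReal (C * ((1/2 : ℝ) ^ j) ^ 2)) :
    ∀ j : ℕ,
      eSupAbs u (ball xs ((1/2 : ℝ) ^ j)) ≤ ENNReal.ofReal (4 * C * ((1/2 : ℝ) ^ j) ^ 2) := by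
  intro j
  induction j with
  | zero => simpa using hball
  | succ j ih =>
    have hmono : eSupAbs u (ball xs ((1/2:ℝ)^(j+1))) ≤ eSupAbs u (ball xs ((1/2:ℝ)^j)) := by
      apply biSup_mono
      intro x hx
      exact ball_subset_ball (pow_le_pow_of_le_one (by norm_num) (by norm_num) (Nat.le_succ j)) hx
    by_cases hj : j ∈ MSetE u xs
    · calc eSupAbs u (ball xs ((1/2:ℝ)^(j+1))) ≤ eSupAbs u (ball xs ((1/2:ℝ)^j)) := hmono
        _ ≤ ENNReal.ofReal (C * ((1/2:ℝ)^j)^2) := hM j hj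
        _ ≤ ENNReal.ofReal (4*C*((1/2:ℝ)^(j+1))^2) := by
            apply ENNReal.ofReal_le_ofReal
            have : ((1/2:ℝ)^(j+1))^2 = (1/4) * ((1/2:ℝ)^j)^2 := by ring
            rw [this]; ring_nf; nlinarith [pow_pos (by norm_num : (0:ℝ) < 1/2) j]
    · simp only [MSetE, Set.mem_setOf_eq] at hj
      have h := not_le.mp hj
      calc eSupAbs u (ball xs ((1/2:ℝ)^(j+1))) ≤ ENNReal.ofReal (1/16) * eSupAbs u (ball xs ((1/2:ℝ)^j)) := h.le
        _ ≤ ENNReal.ofReal (1/16) * ENNReal.ofReal (4*C*((1/2:ℝ)^j)^2) := mul_le_mul_right ih _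
        _ = ENNReal.ofReal ((1/16) * (4*C*((1/2:ℝ)^j)^2)) := (ENNReal.ofReal_mul (by norm_num)).symm
        _ ≤ ENNReal.ofReal (4*C*((1/2:ℝ)^(j+1))^2) := by
            apply ENNReal.ofReal_le_ofReal
            have : ((1/2:ℝ)^(j+1))^2 = (1/4) * ((1/2:ℝ)^j)^2 := by ring
            rw [this]; nlinarith [pow_pos (by norm_num : (0:ℝ) < 1/2) j, sq_nonneg ((1/2:ℝ)^j)]
end
end

section
/- Let F₁, F₂ : S(d) → ℝ be (λ,Λ)-uniformly elliptic and let u be a C^{1,1} strong solution of the free transmission problem on B₁. Then the set {x ∈ B₁ : Du(x) ≠ 0} is dense in Ω(u); that is, Ω(u) is contained in the closure of {x ∈ B₁ : Du(x) ≠ 0}. -/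
open Metric MeasureTheory Set Filter
open scoped Topology RealInnerProductSpace ENNReal NNReal

noncomputable section

/-- If the gradient vanishes identically on a small ball where the equation
`F (H y) = 1` holds a.e. and `H` is the a.e. derivative of the gradient, we get a
contradiction with `F 0 = 0`. -/
lemma aux_grad_zero_contradiction {d : ℕ} {g : E d → E d} {H : E d → Mat d}
    {F : Mat d → ℝ} (hF0 : F 0 = 0) {x : E d} {ε : ℝ} (hε : 0 < ε)
    (hg : ∀ y ∈ ball x ε, g y = 0)
    (hH : ∀ᵐ y ∂(volume : Measure (E d)), y ∈ ball x ε →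
      HasFDerivAt g (LinearMap.toContinuousLinearMap (Matrix.toEuclideanLin (H y))) y)
    (hsol : ∀ᵐ y ∂(volume : Measure (E d)), y ∈ ball x ε → F (H y) = 1) : False := by
  have hae := hH.and hsol
  have hnull : (volume : Measure (E d)) {y | ¬ ((y ∈ ball x ε →
      HasFDerivAt g (LinearMap.toContinuousLinearMap (Matrix.toEuclideanLin (H y))) y) ∧
      (y ∈ ball x ε → F (H y) = 1))} = 0 := ae_iff.mp hae
  have hpos := measure_ball_pos (volume : Measure (E d)) x hε
  obtain ⟨y, hy, hPy⟩ : ∃ y ∈ ball x ε, (y ∈ ball x ε →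
      HasFDerivAt g (LinearMap.toContinuousLinearMap (Matrix.toEuclideanLin (H y))) y) ∧
      (y ∈ ball x ε → F (H y) = 1) := by
    by_contra h
    push_neg at h
    have hsub : ball x ε ⊆ {y | ¬ ((y ∈ ball x ε →
        HasFDerivAt g (LinearMap.toContinuousLinearMap (Matrix.toEuclideanLin (H y))) y) ∧
        (y ∈ ball x ε → F (H y) = 1))} := fun y hy hP => (h y hy hP.1).2 (hP.2 hy)
    exact absurd (measure_mono_null hsub hnull) (ne_of_gt hpos)
  obtain ⟨hDy, hFy⟩ := hPy
  -- g is eventually 0 near y, so its derivative is 0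
  have hzero : HasFDerivAt g (0 : E d →L[ℝ] E d) y := by
    have : g =ᶠ[𝓝 y] fun _ => (0 : E d) := by
      filter_upwards [isOpen_ball.mem_nhds hy] with z hz using hg z hz
    exact (hasFDerivAt_const (0 : E d) y).congr_of_eventuallyEq this
  have hHd : LinearMap.toContinuousLinearMap (Matrix.toEuclideanLin (H y)) =
      (0 : E d →L[ℝ] E d) := (hDy hy).unique hzero
  have hHy : H y = 0 := by
    apply Matrix.toEuclideanLin.injective
    rw [map_zero]
    exact LinearMap.ext fun v => by simpa using ContinuousLinearMap.ext_iff.mp hHd v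
  have := hFy hy
  rw [hHy, hF0] at this
  norm_num at this

/-- the set where the gradient does not vanish is dense in `Ω(u)`. -/
theorem gradient_nonzero_dense {d : ℕ} (hd : 1 ≤ d) {lam Lam : ℝ}
    (hlam : 0 < lam) (hlL : lam ≤ Lam) (F₁ F₂ : Mat d → ℝ)
    (hF₁ : UniformlyElliptic lam Lam F₁) (hF₂ : UniformlyElliptic lam Lam F₂)
    (u : E d → ℝ) (g : E d → E d) (H : E d → Mat d)
    (hu : IsStrongSolutionOn F₁ F₂ u g H (ball (0 : E d) 1)) :
    Omega u (ball (0 : E d) 1) ⊆ closure {x ∈ ball (0 : E d) 1 | g x ≠ 0} := by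
  intro x hx
  by_contra hxc
  have hxB : x ∈ ball (0 : E d) 1 := by
    rcases hx with ⟨h, _⟩ | ⟨h, _⟩ <;> exact h
  have hcont : ContinuousAt u x :=
    (hu.grad x hxB).hasFDerivAt.continuousAt
  have h1 : (closure {x ∈ ball (0 : E d) 1 | g x ≠ 0})ᶜ ∈ 𝓝 x :=
    isClosed_closure.isOpen_compl.mem_nhds hxc
  have h2 : ball (0 : E d) 1 ∈ 𝓝 x := isOpen_ball.mem_nhds hxB
  rcases hx with ⟨_, hpos⟩ | ⟨_, hneg⟩
  · have h3 : {y | 0 < u y} ∈ 𝓝 x := hcont.preimage_mem_nhds (Ioi_mem_nhds hpos)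
    obtain ⟨ε, hε, hball⟩ := Metric.mem_nhds_iff.mp (inter_mem (inter_mem h1 h2) h3)
    have hg : ∀ y ∈ ball x ε, g y = 0 := by
      intro y hy
      obtain ⟨⟨hyc, hyB⟩, _⟩ := hball hy
      by_contra hgy
      exact hyc (subset_closure ⟨hyB, hgy⟩)
    refine aux_grad_zero_contradiction (H := H) hF₁.1 hε hg ?_ ?_
    · filter_upwards [hu.hessAE] with y hy hyb
      exact hy (hball hyb).1.2
    · filter_upwards [hu.solPlus] with y hy hyb
      exact hy (hball hyb).1.2 (hball hyb).2
  · have h3 : {y | u y < 0} ∈ 𝓝 x := hcont.preimage_mem_nhds (Iio_mem_nhds hneg)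
    obtain ⟨ε, hε, hball⟩ := Metric.mem_nhds_iff.mp (inter_mem (inter_mem h1 h2) h3)
    have hg : ∀ y ∈ ball x ε, g y = 0 := by
      intro y hy
      obtain ⟨⟨hyc, hyB⟩, _⟩ := hball hy
      by_contra hgy
      exact hyc (subset_closure ⟨hyB, hgy⟩)
    refine aux_grad_zero_contradiction (H := H) hF₂.1 hε hg ?_ ?_
    · filter_upwards [hu.hessAE] with y hy hyb
      exact hy (hball hyb).1.2
    · filter_upwards [hu.solMinus] with y hy hyb
      exact hy (hball hyb).1.2 (hball hyb).2
end
end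

section
/- There exist constants C₀ > 0 and C > 0, depending only on d, λ, Λ, such that the following holds. Let F₁, F₂ : S(d) → ℝ be (λ,Λ)-uniformly elliptic, convex, and positively homogeneous of degree one; let u be a C^{1,1} strong solution of the free transmission problem on B₁ with sup_{B₁}|u| ≤ 1; suppose V_r(x*,u) ≤ C₀ for every x* ∈ ∂Ω(u) and every r ∈ (0, 1/2), and suppose {x ∈ B₁ : Du(x) ≠ 0} ⊆ Ω(u). Then for every x* ∈ ∂Ω(u) ∩ B_{1/2} and every r ∈ (0, 1/2), one has sup_{x ∈ ∂B_r(x*)} u(x) ≥ C·r². -/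
open Metric MeasureTheory Set Filter
open scoped Topology RealInnerProductSpace ENNReal NNReal

noncomputable section

/-! ### Auxiliary lemmas -/

open scoped Pointwise

section AuxHelpers

/-- The image of a null set under a Lipschitz-on map is null. -/
lemma aux_lipschitz_image_null {d : ℕ} (hd : 1 ≤ d) {f : E d → E d} {s t : Set (E d)} {L : ℝ≥0}
    (hf : LipschitzOnWith L f s) (hts : t ⊆ s) (ht : volume t = 0) :
    volume (f '' t) = 0 := by
  have hne : Nonempty (Fin d) := ⟨⟨0, hd⟩⟩
  have hdet : ENNReal.ofReal |(0 : E d →L[ℝ] E d).det| < (1 : ℝ≥0) := by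
    have h0 : (0 : E d →L[ℝ] E d).det = 0 := by
      simp only [ContinuousLinearMap.det]
      have heq : ((0 : E d →L[ℝ] E d) : E d →ₗ[ℝ] E d) = 0 := rfl
      rw [heq, LinearMap.det_zero' (EuclideanSpace.basisFun (Fin d) ℝ).toBasis]
    simp [h0]
  obtain ⟨δ, hδprop, hδpos⟩ :=
    ((MeasureTheory.addHaar_image_le_mul_of_det_lt (μ := (volume : Measure (E d)))
      (0 : E d →L[ℝ] E d) hdet).and self_mem_nhdsWithin).exists
  set ρ : ℝ := (δ : ℝ) / (L + 1) with hρ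
  have hρpos : 0 < ρ := div_pos hδpos (by positivity)
  have hkey : ρ * L ≤ δ := by
    rw [hρ, div_mul_eq_mul_div, div_le_iff₀ (by positivity : (0:ℝ) < (L:ℝ) + 1)]
    nlinarith [NNReal.coe_nonneg δ, NNReal.coe_nonneg L]
  have happrox : ApproximatesLinearOn (fun x => ρ • f x) (0 : E d →L[ℝ] E d) t δ := by
    intro x hx y hy
    simp only [ContinuousLinearMap.zero_apply, sub_zero, ← smul_sub, norm_smul]
    have hfxy : ‖f x - f y‖ ≤ L * ‖x - y‖ := by
      have := hf.dist_le_mul x (hts hx) y (hts hy)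
      simpa [dist_eq_norm] using this
    calc |ρ| * ‖f x - f y‖ ≤ ρ * (L * ‖x - y‖) := by
          rw [abs_of_pos hρpos]; exact mul_le_mul_of_nonneg_left hfxy hρpos.le
      _ = (ρ * L) * ‖x - y‖ := by ring
      _ ≤ δ * ‖x - y‖ := mul_le_mul_of_nonneg_right hkey (norm_nonneg _)
  have himg : volume ((fun x => ρ • f x) '' t) ≤ 1 * volume t := by
    exact_mod_cast hδprop t _ happrox
  rw [ht, one_mul] at himg
  have h0 : volume (ρ • (f '' t)) = 0 := by
    have heq : (fun x => ρ • f x) '' t = ρ • (f '' t) := by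
      rw [← Set.image_smul, Set.image_image]
    rw [← heq]
    exact le_antisymm (by simpa using himg) bot_le
  rw [MeasureTheory.Measure.addHaar_smul] at h0
  rw [show Module.finrank ℝ (E d) = d from finrank_euclideanSpace_fin] at h0
  rcases mul_eq_zero.mp h0 with h | h
  · exfalso
    have hgt : (0:ℝ) < |ρ| ^ d := by positivity
    simp [ENNReal.ofReal_eq_zero, not_le] at h
    linarith
  · exact h

/-- One-dimensional second derivative test at a local maximum. -/
lemma aux_second_deriv_test {ψ φ' : ℝ → ℝ} {s : ℝ}
    (hmax : IsLocalMax ψ 0)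
    (hψ : ∀ᶠ t in 𝓝 (0:ℝ), HasDerivAt ψ (φ' t) t)
    (hφ' : HasDerivAt φ' s 0) : s ≤ 0 := by
  by_contra hs
  push_neg at hs
  have h0 : φ' 0 = 0 := hmax.hasDerivAt_eq_zero hψ.self_of_nhds
  have hslope : Tendsto (slope φ' 0) (𝓝[≠] 0) (𝓝 s) :=
    hasDerivAt_iff_tendsto_slope.mp hφ'
  have hpos : ∀ᶠ t in 𝓝[≠] (0:ℝ), 0 < slope φ' 0 t :=
    hslope.eventually (eventually_gt_nhds hs)
  rw [eventually_nhdsWithin_iff] at hpos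
  obtain ⟨ε₁, hε₁, hP⟩ := Metric.eventually_nhds_iff.mp hpos
  obtain ⟨ε₂, hε₂, hM⟩ := Metric.eventually_nhds_iff.mp (hmax : ∀ᶠ t in 𝓝 (0:ℝ), ψ t ≤ ψ 0)
  obtain ⟨ε₃, hε₃, hD⟩ := Metric.eventually_nhds_iff.mp hψ
  set ε : ℝ := min (min ε₁ ε₂) ε₃ with hε
  have hεpos : 0 < ε := lt_min (lt_min hε₁ hε₂) hε₃
  have hεa : ε ≤ ε₁ := le_trans (min_le_left _ _) (min_le_left _ _)
  have hεb : ε ≤ ε₂ := le_trans (min_le_left _ _) (min_le_right _ _)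
  have hεc : ε ≤ ε₃ := min_le_right _ _
  set b : ℝ := ε / 2 with hb
  have hbpos : 0 < b := by positivity
  have hblt : ∀ t ∈ Set.Icc (0:ℝ) b, dist t 0 < ε := by
    intro t ht
    rw [Real.dist_eq, sub_zero, abs_of_nonneg ht.1]
    calc t ≤ b := ht.2
      _ < ε := by rw [hb]; linarith
  have hDin : ∀ t ∈ Set.Icc (0:ℝ) b, HasDerivAt ψ (φ' t) t := fun t ht =>
    hD (lt_of_lt_of_le (hblt t ht) hεc)
  have hcont : ContinuousOn ψ (Set.Icc (0:ℝ) b) := fun t ht =>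
    (hDin t ht).continuousAt.continuousWithinAt
  obtain ⟨ξ, hξ, hξeq⟩ := exists_hasDerivAt_eq_slope ψ φ' hbpos hcont
    (fun x hx => hDin x ⟨hx.1.le, hx.2.le⟩)
  have hξpos : 0 < φ' ξ := by
    have hdd : dist ξ 0 < ε := hblt ξ ⟨hξ.1.le, hξ.2.le⟩
    have h1 := hP (lt_of_lt_of_le hdd hεa) (ne_of_gt hξ.1)
    rw [slope_def_field, h0, sub_zero, sub_zero] at h1
    have h2 := mul_pos h1 hξ.1
    rwa [div_mul_cancel₀] at h2
    exact ne_of_gt hξ.1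
  have hψb : ψ b ≤ ψ 0 := hM (by
    rw [Real.dist_eq, sub_zero, abs_of_pos hbpos, hb]; linarith : dist b 0 < ε₂)
  rw [hξeq] at hξpos
  have hfrac : (ψ b - ψ 0) / (b - 0) ≤ 0 := by
    apply div_nonpos_of_nonpos_of_nonneg <;> linarith
  linarith

/-- `HasGradientAt` expressed with `innerSL`. -/
lemma aux_gradient_innerSL {d : ℕ} {u : E d → ℝ} {v y : E d} (h : HasGradientAt u v y) :
    HasFDerivAt u (innerSL ℝ v) y := by
  rw [hasGradientAt_iff_hasFDerivAt] at h
  exact h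

/-- Derivative of the comparison function. -/
lemma aux_hasFDerivAt_phi {d : ℕ} (c : ℝ) (xs q : E d) {u : E d → ℝ} {gy : E d} {y : E d}
    (hu : HasFDerivAt u (innerSL ℝ gy) y) :
    HasFDerivAt (fun z => u z - c * (inner ℝ (z - xs) (z - xs) : ℝ) - (inner ℝ q (z - xs) : ℝ))
      (innerSL ℝ (gy - (2 * c) • (y - xs) - q)) y := by
  have hid : HasFDerivAt (fun z : E d => z - xs) (ContinuousLinearMap.id ℝ (E d)) y :=
    (hasFDerivAt_id y).sub_const xs
  have h2 := hid.inner ℝ hid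
  have h3 : HasFDerivAt (fun z : E d => (inner ℝ q (z - xs) : ℝ)) (innerSL ℝ q) y := by
    have := ((innerSL ℝ q).hasFDerivAt (x := y - xs)).comp y hid
    exact this
  have := (hu.sub (h2.const_mul c)).sub h3
  refine this.congr_fderiv ?_
  ext w
  simp [inner_sub_left, inner_smul_left, real_inner_comm (y - xs) w]
  ring

/-- Second-order test: at a local max of the comparison function, the Hessian quadratic form
is bounded by `2c`. -/
lemma aux_hess_quad_le {d : ℕ} {Φ : E d → ℝ} {gf : E d → E d} {x xs q : E d} {c : ℝ}
    {A : E d →L[ℝ] E d}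
    (hΦ : ∀ᶠ y in 𝓝 x, HasFDerivAt Φ (innerSL ℝ (gf y - (2 * c) • (y - xs) - q)) y)
    (hg : HasFDerivAt gf A x) (hmax : IsLocalMax Φ x) (v : E d) :
    (inner ℝ v (A v) : ℝ) ≤ 2 * c * ‖v‖ ^ 2 := by
  set ℓ : ℝ → E d := fun t => x + t • v with hℓdef
  have hℓ0 : ℓ 0 = x := by simp [hℓdef]
  have hℓderiv : ∀ t : ℝ, HasDerivAt ℓ v t := fun t => by
    have h := ((hasDerivAt_id t).smul_const v).const_add x; rw [one_smul] at h; exact h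
  have hℓtend : Tendsto ℓ (𝓝 0) (𝓝 x) := by
    rw [← hℓ0]; exact ((hℓderiv 0).continuousAt).tendsto
  set φ' : ℝ → ℝ := fun t => (inner ℝ v (gf (ℓ t) - (2 * c) • (ℓ t - xs) - q) : ℝ) with hφ'def
  have hψ : ∀ᶠ t in 𝓝 (0:ℝ), HasDerivAt (Φ ∘ ℓ) (φ' t) t := by
    filter_upwards [hℓtend.eventually hΦ] with t ht
    have h2 := ht.comp_hasDerivAt t (hℓderiv t)
    have heq : φ' t = (innerSL ℝ (gf (ℓ t) - (2 * c) • (ℓ t - xs) - q)) v := by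
      simp only [hφ'def, innerSL_apply_apply]
      exact real_inner_comm _ _
    rw [heq]
    exact h2
  have hm : HasDerivAt (fun t => gf (ℓ t) - (2 * c) • (ℓ t - xs) - q)
      (A v - (2 * c) • v) 0 := by
    have hgf : HasFDerivAt gf A (ℓ 0) := by rwa [hℓ0]
    have h1 : HasDerivAt (fun t => gf (ℓ t)) (A v) 0 := hgf.comp_hasDerivAt 0 (hℓderiv 0)
    have h2 : HasDerivAt (fun t => (2 * c) • (ℓ t - xs)) ((2 * c) • v) 0 :=
      ((hℓderiv 0).sub_const xs).const_smul (2 * c)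
    exact (h1.sub h2).sub_const q
  have hs : HasDerivAt φ' ((inner ℝ v (A v) : ℝ) - 2 * c * ‖v‖ ^ 2) 0 := by
    have := ((innerSL ℝ v).hasFDerivAt).comp_hasDerivAt 0 hm
    refine this.congr_deriv ?_
    simp only [Function.comp, innerSL_apply_apply, inner_sub_right, inner_smul_right,
      real_inner_self_eq_norm_sq]
  have hmaxψ : IsLocalMax (Φ ∘ ℓ) 0 := by
    filter_upwards [hℓtend.eventually hmax] with t ht
    simpa [hℓ0] using ht
  have := aux_second_deriv_test hmaxψ hψ hs
  linarith

lemma aux_matOpNorm_nonneg {d : ℕ} (N : Mat d) : 0 ≤ matOpNorm N := norm_nonneg _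

lemma aux_matOpNorm_smul_one_le {d : ℕ} (a : ℝ) : matOpNorm (a • (1 : Mat d)) ≤ |a| := by
  unfold matOpNorm
  have h1 : Matrix.toEuclideanLin (a • (1 : Mat d)) = a • LinearMap.id := by
    ext v
    simp [Matrix.toEuclideanLin_apply, Matrix.one_mulVec]
  rw [h1]
  have h2 : (LinearMap.toContinuousLinearMap (a • (LinearMap.id : E d →ₗ[ℝ] E d)))
      = a • (ContinuousLinearMap.id ℝ (E d)) := by
    ext v; simp
  rw [h2]
  refine le_trans (ContinuousLinearMap.opNorm_smul_le a _) ?_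
  calc ‖a‖ * ‖ContinuousLinearMap.id ℝ (E d)‖ ≤ ‖a‖ * 1 :=
        mul_le_mul_of_nonneg_left (ContinuousLinearMap.norm_id_le) (norm_nonneg a)
    _ = |a| := by rw [mul_one, Real.norm_eq_abs]

lemma aux_isSymm_smul_one {d : ℕ} (a : ℝ) : (a • (1 : Mat d)).IsSymm := by
  unfold Matrix.IsSymm
  rw [Matrix.transpose_smul, Matrix.transpose_one]

lemma aux_real_isHermitian_of_isSymm {d : ℕ} {M : Mat d} (h : M.IsSymm) : M.IsHermitian := by
  unfold Matrix.IsHermitian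
  rw [Matrix.conjTranspose]
  simpa [Matrix.map, Matrix.IsSymm, Matrix.transpose] using h

lemma aux_inner_toEuclideanLin {d : ℕ} (M : Mat d) (x : Fin d → ℝ) :
    (inner ℝ ((WithLp.equiv 2 (Fin d → ℝ)).symm x)
      (Matrix.toEuclideanLin M ((WithLp.equiv 2 (Fin d → ℝ)).symm x)) : ℝ)
      = dotProduct x (M.mulVec x) := by
  rw [Matrix.toEuclideanLin_apply]
  simp [PiLp.inner_apply, dotProduct, mul_comm]

/-- If the Hessian quadratic form is bounded by `2c` then `F(M) ≤ 2cΛ` for uniformly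
elliptic `F`. -/
lemma aux_matrix_bound {d : ℕ} {lam Lam c : ℝ} (hlam : 0 < lam) (hlL : lam ≤ Lam) (hc : 0 ≤ c)
    {F : Mat d → ℝ} (hF : UniformlyElliptic lam Lam F) {M : Mat d} (hM : M.IsSymm)
    (hquad : ∀ v : E d, (inner ℝ v (Matrix.toEuclideanLin M v) : ℝ) ≤ 2 * c * ‖v‖ ^ 2) :
    F M ≤ 2 * c * Lam := by
  set N : Mat d := (2 * c) • (1 : Mat d) - M with hN
  have hNsymm : N.IsSymm := by
    unfold Matrix.IsSymm
    rw [hN, Matrix.transpose_sub, Matrix.transpose_smul, Matrix.transpose_one, hM]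
  have hNpsd : N.PosSemidef := by
    rw [Matrix.posSemidef_iff_dotProduct_mulVec]
    constructor
    · exact aux_real_isHermitian_of_isSymm hNsymm
    · intro x
      have hv := hquad ((WithLp.equiv 2 (Fin d → ℝ)).symm x)
      rw [aux_inner_toEuclideanLin] at hv
      have hnorm : ‖(WithLp.equiv 2 (Fin d → ℝ)).symm x‖ ^ 2 = dotProduct x x := by
        rw [← real_inner_self_eq_norm_sq]
        rw [real_inner_self_eq_norm_sq, EuclideanSpace.real_norm_sq_eq]
        simp [dotProduct, sq]
      rw [hnorm] at hv
      have hexp : dotProduct (star x) (N.mulVec x)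
          = 2 * c * dotProduct x x - dotProduct x (M.mulVec x) := by
        rw [hN, Matrix.sub_mulVec]
        simp [Matrix.smul_mulVec, Matrix.one_mulVec, dotProduct_sub,
          dotProduct_smul, smul_eq_mul]
      rw [hexp]
      linarith
  have h1 := (hF.2 M N hM hNsymm hNpsd).1
  have hMN : M + N = (2 * c) • (1 : Mat d) := by rw [hN]; ring_nf; exact add_sub_cancel _ _
  rw [hMN] at h1
  have hdotself : ∀ x : Fin d → ℝ, 0 ≤ dotProduct x x := fun x =>
    Finset.sum_nonneg fun i _ => mul_self_nonneg (x i)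
  have hpsd1 : ((2 * c) • (1 : Mat d)).PosSemidef := by
    rw [Matrix.posSemidef_iff_dotProduct_mulVec]
    constructor
    · exact aux_real_isHermitian_of_isSymm (aux_isSymm_smul_one _)
    · intro x
      have hh : dotProduct (star x) (((2 * c) • (1 : Mat d)).mulVec x)
          = 2 * c * dotProduct x x := by
        simp [Matrix.smul_mulVec, Matrix.one_mulVec, smul_eq_mul]
      rw [hh]
      have := hdotself x
      positivity
  have h2 : F ((2 * c) • (1 : Mat d)) ≤ Lam * matOpNorm ((2 * c) • (1 : Mat d)) := by
    have h0symm : (0 : Mat d).IsSymm := by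
      unfold Matrix.IsSymm; rw [Matrix.transpose_zero]
    have := (hF.2 0 ((2 * c) • 1) h0symm (aux_isSymm_smul_one _) hpsd1).2
    simpa [hF.1] using this
  have h3 : Lam * matOpNorm ((2 * c) • (1 : Mat d)) ≤ Lam * (2 * c) := by
    apply mul_le_mul_of_nonneg_left _ (le_trans hlam.le hlL)
    refine le_trans (aux_matOpNorm_smul_one_le _) ?_
    rw [abs_of_nonneg (by positivity)]
  have h4 : 0 ≤ lam * matOpNorm N := mul_nonneg hlam.le (aux_matOpNorm_nonneg N)
  linarith

end AuxHelpers


set_option maxHeartbeats 2000000 in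
/-- non-degeneracy of the free boundary: on spheres around free boundary
points, the supremum of `u` grows at least quadratically. -/
theorem nondegeneracy {d : ℕ} (hd : 1 ≤ d) {lam Lam : ℝ}
    (hlam : 0 < lam) (hlL : lam ≤ Lam) :
    ∃ C₀ : ℝ, 0 < C₀ ∧ ∃ C : ℝ, 0 < C ∧
      ∀ F₁ F₂ : Mat d → ℝ,
        UniformlyElliptic lam Lam F₁ → UniformlyElliptic lam Lam F₂ →
        ConvexOn ℝ Set.univ F₁ → ConvexOn ℝ Set.univ F₂ →
        PosHomOne F₁ → PosHomOne F₂ →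
        ∀ (u : E d → ℝ) (g : E d → E d) (H : E d → Mat d),
          IsStrongSolutionOn F₁ F₂ u g H (ball (0 : E d) 1) →
          (∀ x ∈ ball (0 : E d) 1, |u x| ≤ 1) →
          (∀ xs ∈ freeBoundary u (ball (0 : E d) 1), ∀ r ∈ Set.Ioo (0 : ℝ) (1/2),
            Vr u (ball (0 : E d) 1) xs r ≤ C₀) →
          {x ∈ ball (0 : E d) 1 | g x ≠ 0} ⊆ Omega u (ball (0 : E d) 1) →
          ∀ xs ∈ freeBoundary u (ball (0 : E d) 1) ∩ ball (0 : E d) (1/2),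
            ∀ r ∈ Set.Ioo (0 : ℝ) (1/2),
              C * r ^ 2 ≤ sSup (u '' sphere xs r) := by
  have hLam : 0 < Lam := lt_of_lt_of_le hlam hlL
  refine ⟨1, one_pos, 1 / (8 * Lam), by positivity, ?_⟩
  intro F₁ F₂ hF₁ hF₂ _hcv1 _hcv2 _hph1 _hph2 u g H hsol _hbound _hVr hgrad xs hxs r hr
  set D : Set (E d) := ball (0 : E d) 1 with hDdef
  obtain ⟨hfb, hxs2⟩ := hxs
  obtain ⟨hfr, hxsD⟩ := hfb
  obtain ⟨hrpos, hr2⟩ := hr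
  set c : ℝ := 1 / (4 * Lam) with hc
  have hcpos : 0 < c := by positivity
  by_contra hcon
  push_neg at hcon
  -- basic facts
  have hDopen : IsOpen D := isOpen_ball
  have hFD : ∀ y ∈ D, HasFDerivAt u (innerSL ℝ (g y)) y := fun y hy =>
    aux_gradient_innerSL (hsol.grad y hy)
  have hcontAt : ∀ y ∈ D, ContinuousAt u y := fun y hy => (hFD y hy).continuousAt
  have hOplus : IsOpen (OmegaPlus u D) := by
    rw [isOpen_iff_mem_nhds]
    rintro x ⟨hxD, hxu⟩
    have h1 : u ⁻¹' Set.Ioi 0 ∈ 𝓝 x := (hcontAt x hxD) (Ioi_mem_nhds hxu)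
    filter_upwards [h1, hDopen.mem_nhds hxD] with y hy1 hy2
    exact ⟨hy2, hy1⟩
  have hOminus : IsOpen (OmegaMinus u D) := by
    rw [isOpen_iff_mem_nhds]
    rintro x ⟨hxD, hxu⟩
    have h1 : u ⁻¹' Set.Iio 0 ∈ 𝓝 x := (hcontAt x hxD) (Iio_mem_nhds hxu)
    filter_upwards [h1, hDopen.mem_nhds hxD] with y hy1 hy2
    exact ⟨hy2, hy1⟩
  have hsubD : closedBall xs r ⊆ D := by
    intro y hy
    rw [mem_closedBall] at hy
    rw [hDdef, mem_ball]
    rw [mem_ball] at hxs2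
    calc dist y 0 ≤ dist y xs + dist xs 0 := dist_triangle _ _ _
      _ < 1 := by linarith
  -- the free boundary point is a zero of u, in the closure of Omega
  have hxsu : u xs = 0 := by
    rcases hfr with h | h
    · rw [hOplus.frontier_eq] at h
      obtain ⟨hcl, hnot⟩ := h
      have hle : u xs ≤ 0 := by
        by_contra hgt
        push_neg at hgt
        exact hnot ⟨hxsD, hgt⟩
      have hge : 0 ≤ u xs := by
        by_contra hlt
        push_neg at hlt
        have hnb : u ⁻¹' Set.Iio 0 ∈ 𝓝 xs := (hcontAt xs hxsD) (Iio_mem_nhds hlt)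
        obtain ⟨y, hy1, hy2⟩ := mem_closure_iff_nhds.mp hcl _ hnb
        have ha : (0:ℝ) < u y := hy2.2
        have hb : u y < 0 := hy1
        linarith
      linarith
    · rw [hOminus.frontier_eq] at h
      obtain ⟨hcl, hnot⟩ := h
      have hge : 0 ≤ u xs := by
        by_contra hlt
        push_neg at hlt
        exact hnot ⟨hxsD, hlt⟩
      have hle : u xs ≤ 0 := by
        by_contra hgt
        push_neg at hgt
        have hnb : u ⁻¹' Set.Ioi 0 ∈ 𝓝 xs := (hcontAt xs hxsD) (Ioi_mem_nhds hgt)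
        obtain ⟨y, hy1, hy2⟩ := mem_closure_iff_nhds.mp hcl _ hnb
        have ha : u y < 0 := hy2.2
        have hb : (0:ℝ) < u y := hy1
        linarith
      linarith
  have hxscl : xs ∈ closure (Omega u D) := by
    rcases hfr with h | h
    · exact closure_mono subset_union_left (frontier_subset_closure h)
    · exact closure_mono subset_union_right (frontier_subset_closure h)
  -- boundary bound on the sphere
  have hsphere : ∀ y ∈ sphere xs r, u y < 1 / (8 * Lam) * r ^ 2 := by
    intro y hy
    have hbdd : BddAbove (u '' sphere xs r) := by
      have hcomp : IsCompact (u '' sphere xs r) :=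
        (isCompact_sphere xs r).image_of_continuousOn
          (fun z hz => (hcontAt z (hsubD (sphere_subset_closedBall hz))).continuousWithinAt)
      exact hcomp.bddAbove
    exact lt_of_le_of_lt (le_csSup hbdd ⟨y, hy, rfl⟩) hcon
  -- the "good event" predicate and the bad set
  set P : E d → Prop := fun x => x ∈ D →
    ((H x).IsSymm ∧
      HasFDerivAt g (LinearMap.toContinuousLinearMap (Matrix.toEuclideanLin (H x))) x ∧
      (0 < u x → F₁ (H x) = 1) ∧ (u x < 0 → F₂ (H x) = 1)) with hPdef
  set Bad : Set (E d) := {x | ¬ P x} with hBad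
  have hbadnull : volume Bad = 0 := by
    have hae : ∀ᵐ x ∂(volume : Measure (E d)), P x := by
      filter_upwards [hsol.hessSymm, hsol.hessAE, hsol.solPlus, hsol.solMinus] with
        x h1 h2 h3 h4 hxD
      exact ⟨h1 hxD, h2 hxD, h3 hxD, h4 hxD⟩
    exact hae
  -- the modified gradient map
  set Gfun : E d → E d := fun y => g y - (2 * c) • (y - xs) with hGfun
  -- key contact lemma
  have key : ∀ q ∈ ball (0 : E d) (c * r / 8),
      ∃ x, (x ∈ Bad ∩ closedBall xs r ∧ Gfun x = q) ∨
        (x ∈ ball xs r ∧ u x = 0 ∧ Gfun x = q ∧ g x = 0) := by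
    intro q hq
    have hqn : ‖q‖ < c * r / 8 := by rwa [mem_ball, dist_zero_right] at hq
    set Φ : E d → ℝ := fun z => u z - c * (inner ℝ (z - xs) (z - xs) : ℝ) -
      (inner ℝ q (z - xs) : ℝ) with hΦdef
    have hΦderiv : ∀ y ∈ D, HasFDerivAt Φ (innerSL ℝ (Gfun y - q)) y := by
      intro y hy
      have h1 := aux_hasFDerivAt_phi c xs q (hFD y hy)
      rw [hGfun]
      exact h1
    have hcontΦ : ContinuousOn Φ (closedBall xs r) := fun z hz =>
      ((hΦderiv z (hsubD hz)).continuousAt).continuousWithinAt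
    obtain ⟨x₀, hx₀K, hmax⟩ := (isCompact_closedBall xs r).exists_isMaxOn
      ⟨xs, mem_closedBall_self hrpos.le⟩ hcontΦ
    have hΦxs : Φ xs = 0 := by simp [hΦdef, hxsu]
    have hsphΦ : ∀ y ∈ sphere xs r, Φ y < 0 := by
      intro y hy
      have hyr : ‖y - xs‖ = r := by rw [← dist_eq_norm]; exact mem_sphere.mp hy
      have h1 : (inner ℝ (y - xs) (y - xs) : ℝ) = r ^ 2 := by
        rw [real_inner_self_eq_norm_sq, hyr]
      have h2 : |(inner ℝ q (y - xs) : ℝ)| ≤ ‖q‖ * r := by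
        refine le_trans (abs_real_inner_le_norm _ _) ?_
        rw [hyr]
      have h3 : u y < 1 / (8 * Lam) * r ^ 2 := hsphere y hy
      have h4 : 1 / (8 * Lam) * r ^ 2 = c / 2 * r ^ 2 := by rw [hc]; ring
      have h5 : -(inner ℝ q (y - xs) : ℝ) ≤ ‖q‖ * r := by
        have := (abs_le.mp h2).1; linarith
      have h6 : ‖q‖ * r ≤ (c * r / 8) * r := mul_le_mul_of_nonneg_right hqn.le hrpos.le
      rw [h4] at h3
      rw [hΦdef]
      simp only
      rw [h1]
      nlinarith [sq_nonneg r]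
    have hball : x₀ ∈ ball xs r := by
      rw [mem_ball]
      rcases lt_or_eq_of_le (mem_closedBall.mp hx₀K) with h | h
      · exact h
      · exfalso
        have h0 : Φ xs ≤ Φ x₀ := hmax (mem_closedBall_self hrpos.le)
        have h1 : Φ x₀ < 0 := hsphΦ x₀ (by rwa [mem_sphere])
        rw [hΦxs] at h0
        linarith
    have hloc : IsLocalMax Φ x₀ :=
      hmax.isLocalMax (Filter.mem_of_superset (isOpen_ball.mem_nhds hball)
        ball_subset_closedBall)
    have hG : Gfun x₀ = q := by
      have h0 := hloc.hasFDerivAt_eq_zero (hΦderiv x₀ (hsubD hx₀K))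
      have h1 : (inner ℝ (Gfun x₀ - q) (Gfun x₀ - q) : ℝ) = 0 := by
        have h2 := congrFun (congrArg DFunLike.coe h0) (Gfun x₀ - q)
        simpa only [ContinuousLinearMap.zero_apply, innerSL_apply_apply] using h2
      exact sub_eq_zero.mp (inner_self_eq_zero.mp h1)
    by_cases hxbad : x₀ ∈ Bad
    · exact ⟨x₀, Or.inl ⟨⟨hxbad, hx₀K⟩, hG⟩⟩
    · have hPx : P x₀ := not_not.mp hxbad
      obtain ⟨hsymm, hhess, hsp, hsm⟩ := hPx (hsubD hx₀K)
      have hquad : ∀ v : E d,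
          (inner ℝ v (Matrix.toEuclideanLin (H x₀) v) : ℝ) ≤ 2 * c * ‖v‖ ^ 2 := by
        intro v
        have hev : ∀ᶠ y in 𝓝 x₀,
            HasFDerivAt Φ (innerSL ℝ (g y - (2 * c) • (y - xs) - q)) y := by
          filter_upwards [hDopen.mem_nhds (hsubD hx₀K)] with y hy
          have := hΦderiv y hy
          rwa [hGfun] at this
        simpa using aux_hess_quad_le hev hhess hloc v
      have h2cL : 2 * c * Lam = 1 / 2 := by rw [hc]; field_simp; ring
      have hu0 : u x₀ = 0 := by
        rcases lt_trichotomy (u x₀) 0 with h | h | h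
        · exfalso
          have hb := aux_matrix_bound hlam hlL hcpos.le hF₂ hsymm hquad
          rw [hsm h, h2cL] at hb
          linarith
        · exact h
        · exfalso
          have hb := aux_matrix_bound hlam hlL hcpos.le hF₁ hsymm hquad
          rw [hsp h, h2cL] at hb
          linarith
      have hg0 : g x₀ = 0 := by
        by_contra hne0
        have hmem := hgrad ⟨hsubD hx₀K, hne0⟩
        rcases hmem with ⟨_, hpos⟩ | ⟨_, hneg⟩ <;> linarith
      exact ⟨x₀, Or.inr ⟨hball, hu0, hG, hg0⟩⟩
  -- the image of the bad set is null
  have hTnull : volume (Gfun '' (Bad ∩ closedBall xs r)) = 0 := by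
    classical
    have hloclip : ∀ x ∈ closedBall xs r, ∃ s : Set (E d), s ∈ 𝓝 x ∧
        ∃ L : ℝ≥0, LipschitzOnWith L Gfun (s ∩ D) := by
      intro x hx
      obtain ⟨K, s, hs, hlips⟩ := hsol.lipGrad x (hsubD hx)
      refine ⟨s, hs, K + ‖(2 * c : ℝ)‖₊, ?_⟩
      rw [lipschitzOnWith_iff_dist_le_mul] at hlips ⊢
      intro a ha b hb
      have h1 := hlips a ha b hb
      have h2 : dist ((2*c) • (a - xs)) ((2*c) • (b - xs)) = ‖(2*c : ℝ)‖ * dist a b := by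
        rw [dist_eq_norm, ← smul_sub]
        rw [show (a - xs) - (b - xs) = a - b by abel]
        rw [norm_smul, ← dist_eq_norm]
      calc dist (Gfun a) (Gfun b)
          ≤ dist (g a) (g b) + dist ((2*c) • (a - xs)) ((2*c) • (b - xs)) := by
            rw [hGfun]; exact dist_sub_sub_le _ _ _ _
        _ ≤ (K : ℝ) * dist a b + ‖(2*c : ℝ)‖ * dist a b := by
            rw [h2]
            have hdn : (0:ℝ) ≤ dist a b := dist_nonneg
            nlinarith [h1]
        _ = (↑(K + ‖(2 * c : ℝ)‖₊) : ℝ) * dist a b := by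
            push_cast
            ring
    choose! sfun hsmem Lfun hLips using hloclip
    obtain ⟨t, htmem, hcover⟩ := (isCompact_closedBall xs r).elim_nhds_subcover sfun
      (fun x hx => hsmem x hx)
    have hcov2 : Gfun '' (Bad ∩ closedBall xs r) ⊆
        ⋃ x ∈ t, Gfun '' (Bad ∩ closedBall xs r ∩ (sfun x ∩ D)) := by
      rintro z ⟨w, hw, rfl⟩
      have hwmem := hcover hw.2
      rw [Set.mem_iUnion₂] at hwmem
      obtain ⟨x, hxt, hwx⟩ := hwmem
      rw [Set.mem_iUnion₂]
      exact ⟨x, hxt, Set.mem_image_of_mem _ ⟨hw, hwx, hsubD hw.2⟩⟩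
    refine measure_mono_null hcov2 ?_
    refine (measure_biUnion_null_iff t.countable_toSet).mpr ?_
    intro x hxt
    exact aux_lipschitz_image_null hd (hLips x (htmem x hxt)) Set.inter_subset_right
      (measure_mono_null (Set.inter_subset_left.trans Set.inter_subset_left) hbadnull)
  -- conclusion: u vanishes a.e. near xs
  set ρ : ℝ := r / 16 with hρdef
  have hρpos : 0 < ρ := by positivity
  set e : E d → E d := fun y => (2 * c) • (xs - y) with hedef
  have hEsub : {y ∈ ball xs ρ | u y ≠ 0} ⊆ e ⁻¹' (Gfun '' (Bad ∩ closedBall xs r)) := by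
    rintro y ⟨hyball, hyne⟩
    have hqmem : e y ∈ ball (0 : E d) (c * r / 8) := by
      rw [mem_ball, dist_zero_right, hedef]
      simp only
      rw [norm_smul, Real.norm_eq_abs, abs_of_pos (by positivity : (0:ℝ) < 2 * c)]
      have h1 : ‖xs - y‖ < ρ := by
        rw [← dist_eq_norm, dist_comm]
        exact mem_ball.mp hyball
      calc 2 * c * ‖xs - y‖ < 2 * c * ρ := mul_lt_mul_of_pos_left h1 (by positivity)
        _ = c * r / 8 := by rw [hρdef]; ring
    obtain ⟨x, hcase⟩ := key _ hqmem
    rcases hcase with ⟨hxmem, hGx⟩ | ⟨hxball, hxu, hGx, hgx⟩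
    · exact Set.mem_preimage.mpr (hGx ▸ Set.mem_image_of_mem Gfun hxmem)
    · exfalso
      have hxy : x = y := by
        have h1 : Gfun x = (2 * c) • (xs - x) := by
          rw [hGfun]
          simp only [hgx, zero_sub, ← smul_neg, neg_sub]
        have h2 : (2 * c) • (xs - x) = (2 * c) • (xs - y) := by
          rw [← h1, hGx, hedef]
        have h3 : xs - x = xs - y :=
          smul_right_injective (E d) (by positivity : (2 * c : ℝ) ≠ 0) h2
        exact sub_right_injective h3
      exact hyne (hxy ▸ hxu)
  have hpre : volume (e ⁻¹' (Gfun '' (Bad ∩ closedBall xs r))) = 0 := by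
    set einv : E d → E d := fun q => xs - (1 / (2 * c)) • q with heinv
    have hsubset : e ⁻¹' (Gfun '' (Bad ∩ closedBall xs r)) ⊆
        einv '' (Gfun '' (Bad ∩ closedBall xs r)) := by
      intro y hy
      refine ⟨e y, hy, ?_⟩
      rw [heinv, hedef]
      simp only
      rw [smul_smul, show (1 / (2*c)) * (2*c) = 1 by field_simp, one_smul]
      abel
    have hlip : LipschitzOnWith (Real.toNNReal (1 / (2 * c))) einv Set.univ := by
      rw [lipschitzOnWith_iff_dist_le_mul]
      intro a _ b _
      rw [heinv]
      simp only
      rw [dist_eq_norm, show (xs - (1/(2*c)) • a) - (xs - (1/(2*c)) • b)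
          = (1/(2*c)) • (b - a) by rw [smul_sub]; abel]
      rw [norm_smul, Real.norm_eq_abs, abs_of_pos (by positivity : (0:ℝ) < 1/(2*c))]
      rw [Real.coe_toNNReal _ (by positivity), dist_eq_norm, norm_sub_rev]
    exact measure_mono_null hsubset
      (aux_lipschitz_image_null hd hlip (Set.subset_univ _) hTnull)
  have hΩopen : IsOpen (Omega u D) := hOplus.union hOminus
  have hne : ((ball xs ρ) ∩ Omega u D).Nonempty :=
    mem_closure_iff.mp hxscl (ball xs ρ) isOpen_ball (mem_ball_self hρpos)
  have hsub2 : Omega u D ∩ ball xs ρ ⊆ {y ∈ ball xs ρ | u y ≠ 0} := by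
    rintro y ⟨hyΩ, hyb⟩
    refine ⟨hyb, ?_⟩
    rcases hyΩ with ⟨_, hpos⟩ | ⟨_, hneg⟩
    · exact ne_of_gt hpos
    · exact ne_of_lt hneg
  have hnull2 : volume (Omega u D ∩ ball xs ρ) = 0 :=
    measure_mono_null (hsub2.trans hEsub) hpre
  have hposm : 0 < volume (Omega u D ∩ ball xs ρ) := by
    refine (hΩopen.inter isOpen_ball).measure_pos volume ?_
    obtain ⟨y, hy1, hy2⟩ := hne
    exact ⟨y, hy2, hy1⟩
  rw [hnull2] at hposm
  exact lt_irrefl _ hposm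
end
end
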